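/- Let (A, E, s) be a weakly idempotent complete extriangulated category. Then any extriangle of the form A →(a1,a2)ᵀ B1 ⊕ B2 →(0,b2) C ⇢δ is isomorphic to the direct sum of the extriangle ⟨B1 →id B1 → 0, 0⟩ and an extriangle ⟨A' →(a2 s) B2 →b2 C, δ'⟩, where (x s) : B1 ⊕ A' → A is an isomorphism for suitable morphisms x : B1 → A and s : A' → A. In particular, b2 : B2 → C is also a deflation. -/

import Mathlib

/-!
Common axiomatic framework: extriangulated categories in the sense of Nakaoka–Palu,
formalised as a biadditive functor `E` together with a realisation predicate
`IsExtriangle` subject to the axioms (ET1)–(ET4), (ET3)ᵒᵖ, (ET4)ᵒᵖ.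
-/

open CategoryTheory CategoryTheory.Limits ZeroObject

attribute [local instance] CategoryTheory.Limits.hasBinaryBiproducts_of_finite_biproducts

universe v u

namespace ExtriPaper

/-- The data underlying an extriangulated category: a biadditive functor `E` and,
for each extension `δ ∈ E(X, A)`, the predicate picking out the pairs of composable
morphisms `A ⟶ B ⟶ X` belonging to the equivalence class `s(δ)`. -/
structure PreExt (C : Type u) [Category.{v} C] [Preadditive C] where
  E : Cᵒᵖ ⥤ C ⥤ AddCommGrpCat.{v}
  IsExtriangle : ∀ {A B X : C}, (A ⟶ B) → (B ⟶ X) → ↥((E.obj (Opposite.op X)).obj A) → Prop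

namespace PreExt

variable {C : Type u} [Category.{v} C] [Preadditive C]
variable (S : PreExt C)

/-- The group `E(X, A)` of extensions of `X` by `A`. -/
abbrev Ext (X A : C) : Type v := ↥((S.E.obj (Opposite.op X)).obj A)

/-- Pushforward `a_* δ` of an extension along `a : A ⟶ A'`. -/
def push {X A A' : C} (a : A ⟶ A') (δ : S.Ext X A) : S.Ext X A' :=
  (S.E.obj (Opposite.op X)).map a δ

/-- Pullback `c^* δ` of an extension along `c : X' ⟶ X`. -/
def pull {X' X A : C} (c : X' ⟶ X) (δ : S.Ext X A) : S.Ext X' A :=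
  (S.E.map c.op).app A δ

section Axioms

variable [HasZeroObject C] [HasFiniteBiproducts C]

/-- The direct sum `δ ⊕ δ'` of two extensions. -/
noncomputable def sumExt {X X' A A' : C} (δ : S.Ext X A) (δ' : S.Ext X' A') :
    S.Ext (X ⊞ X') (A ⊞ A') :=
  S.push biprod.inl (S.pull biprod.fst δ) + S.push biprod.inr (S.pull biprod.snd δ')

/-- The axioms of an extriangulated category (Nakaoka–Palu): `E` is biadditive,
`s` (encoded by `IsExtriangle`) is an additive realisation defined on equivalence
classes, and the axioms (ET3), (ET3)ᵒᵖ, (ET4), (ET4)ᵒᵖ hold. -/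
structure IsET : Prop where
  /-- Biadditivity of `E` in the covariant variable. -/
  push_add : ∀ {X A A' : C} (a b : A ⟶ A') (δ : S.Ext X A),
      S.push (a + b) δ = S.push a δ + S.push b δ
  /-- Biadditivity of `E` in the contravariant variable. -/
  pull_add : ∀ {X X' A : C} (c d : X' ⟶ X) (δ : S.Ext X A),
      S.pull (c + d) δ = S.pull c δ + S.pull d δ
  /-- Every extension is realised by a pair of composable morphisms. -/
  realize_exists : ∀ {A X : C} (δ : S.Ext X A),
      ∃ (B : C) (f : A ⟶ B) (g : B ⟶ X), S.IsExtriangle f g δ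
  /-- The realisation is closed under equivalence of pairs of composable morphisms. -/
  realize_iso : ∀ {A B B' X : C} {f : A ⟶ B} {g : B ⟶ X} {δ : S.Ext X A} (e : B ≅ B'),
      S.IsExtriangle f g δ → S.IsExtriangle (f ≫ e.hom) (e.inv ≫ g) δ
  /-- Any two realisations of the same extension are equivalent. -/
  realize_unique : ∀ {A B B' X : C} {f : A ⟶ B} {g : B ⟶ X} {f' : A ⟶ B'} {g' : B' ⟶ X}
      {δ : S.Ext X A}, S.IsExtriangle f g δ → S.IsExtriangle f' g' δ →
      ∃ e : B ≅ B', f ≫ e.hom = f' ∧ e.hom ≫ g' = g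
  /-- Morphisms of extensions lift to morphisms of extriangles. -/
  realize_map : ∀ {A B X A' B' X' : C} {f : A ⟶ B} {g : B ⟶ X} {δ : S.Ext X A}
      {f' : A' ⟶ B'} {g' : B' ⟶ X'} {δ' : S.Ext X' A'},
      S.IsExtriangle f g δ → S.IsExtriangle f' g' δ' →
      ∀ (a : A ⟶ A') (c : X ⟶ X'), S.push a δ = S.pull c δ' →
      ∃ b : B ⟶ B', f ≫ b = a ≫ f' ∧ b ≫ g' = g ≫ c
  /-- The zero extension is realised by the split pair. -/
  realize_zero : ∀ (A X : C),
      S.IsExtriangle (biprod.inl : A ⟶ A ⊞ X) (biprod.snd : A ⊞ X ⟶ X) (0 : S.Ext X A)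
  /-- The realisation is additive. -/
  realize_sum : ∀ {A B X A' B' X' : C} {f : A ⟶ B} {g : B ⟶ X} {δ : S.Ext X A}
      {f' : A' ⟶ B'} {g' : B' ⟶ X'} {δ' : S.Ext X' A'},
      S.IsExtriangle f g δ → S.IsExtriangle f' g' δ' →
      S.IsExtriangle (biprod.map f f') (biprod.map g g') (S.sumExt δ δ')
  /-- Axiom (ET3). -/
  et3 : ∀ {A B X A' B' X' : C} {f : A ⟶ B} {g : B ⟶ X} {δ : S.Ext X A}
      {f' : A' ⟶ B'} {g' : B' ⟶ X'} {δ' : S.Ext X' A'},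
      S.IsExtriangle f g δ → S.IsExtriangle f' g' δ' →
      ∀ (a : A ⟶ A') (b : B ⟶ B'), f ≫ b = a ≫ f' →
      ∃ c : X ⟶ X', g ≫ c = b ≫ g' ∧ S.push a δ = S.pull c δ'
  /-- Axiom (ET3)ᵒᵖ. -/
  et3op : ∀ {A B X A' B' X' : C} {f : A ⟶ B} {g : B ⟶ X} {δ : S.Ext X A}
      {f' : A' ⟶ B'} {g' : B' ⟶ X'} {δ' : S.Ext X' A'},
      S.IsExtriangle f g δ → S.IsExtriangle f' g' δ' →
      ∀ (b : B ⟶ B') (c : X ⟶ X'), g ≫ c = b ≫ g' →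
      ∃ a : A ⟶ A', f ≫ b = a ≫ f' ∧ S.push a δ = S.pull c δ'
  /-- Axiom (ET4). -/
  et4 : ∀ {A B D F G : C} {f : A ⟶ B} {f' : B ⟶ D} {δ : S.Ext D A}
      {g : B ⟶ G} {g' : G ⟶ F} {δ' : S.Ext F B},
      S.IsExtriangle f f' δ → S.IsExtriangle g g' δ' →
      ∃ (E₀ : C) (h : G ⟶ E₀) (d : D ⟶ E₀) (e : E₀ ⟶ F) (δ'' : S.Ext E₀ A),
        S.IsExtriangle (f ≫ g) h δ'' ∧
        S.IsExtriangle d e (S.push f' δ') ∧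
        S.pull d δ'' = δ ∧
        S.push f δ'' = S.pull e δ' ∧
        f' ≫ d = g ≫ h ∧ h ≫ e = g'
  /-- Axiom (ET4)ᵒᵖ. -/
  et4op : ∀ {D B A F G : C} {p : D ⟶ B} {f₁ : B ⟶ A} {δ₁ : S.Ext A D}
      {q : F ⟶ G} {g₁ : G ⟶ B} {δ₁' : S.Ext B F},
      S.IsExtriangle p f₁ δ₁ → S.IsExtriangle q g₁ δ₁' →
      ∃ (E₀ : C) (h : E₀ ⟶ G) (d : E₀ ⟶ D) (e : F ⟶ E₀) (δ'' : S.Ext A E₀),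
        S.IsExtriangle h (g₁ ≫ f₁) δ'' ∧
        S.IsExtriangle e d (S.pull p δ₁') ∧
        S.push d δ'' = δ₁ ∧
        S.pull f₁ δ'' = S.push e δ₁' ∧
        d ≫ p = h ≫ g₁ ∧ e ≫ h = q

end Axioms

/-- A morphism is an inflation if it occurs as the first morphism of an extriangle. -/
def IsInflation {A B : C} (f : A ⟶ B) : Prop :=
  ∃ (X : C) (g : B ⟶ X) (δ : S.Ext X A), S.IsExtriangle f g δ

/-- A morphism is a deflation if it occurs as the second morphism of an extriangle. -/
def IsDeflation {B X : C} (g : B ⟶ X) : Prop :=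
  ∃ (A : C) (f : A ⟶ B) (δ : S.Ext X A), S.IsExtriangle f g δ

/-- An isomorphism of extriangles: a triple of isomorphisms compatible with the
structure morphisms and identifying the two extensions. -/
def TriIso {A B X A' B' X' : C} (f : A ⟶ B) (g : B ⟶ X) (δ : S.Ext X A)
    (f' : A' ⟶ B') (g' : B' ⟶ X') (δ' : S.Ext X' A') : Prop :=
  ∃ (iA : A ≅ A') (iB : B ≅ B') (iX : X ≅ X'),
    f ≫ iB.hom = iA.hom ≫ f' ∧ g ≫ iX.hom = iB.hom ≫ g' ∧
    S.push iA.hom δ = S.pull iX.hom δ'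

/-- A chain of `t` composable extriangles: inflations `obj i ⟶ obj (i+1)` each fitting
in an extriangle with cone `factor i`.  This underlies filtrations, inflation series
and composition series alike. -/
structure FChain (t : ℕ) where
  obj : Fin (t + 1) → C
  factor : Fin t → C
  f : ∀ i : Fin t, obj i.castSucc ⟶ obj i.succ
  g : ∀ i : Fin t, obj i.succ ⟶ factor i
  δ : ∀ i : Fin t, S.Ext (factor i) (obj i.castSucc)
  ext : ∀ i : Fin t, S.IsExtriangle (f i) (g i) (δ i)

/-- The composite `obj 0 ⟶ obj i` of the morphisms of a chain. -/
def FChain.comp {t : ℕ} (c : S.FChain t) : ∀ i : Fin (t + 1), c.obj 0 ⟶ c.obj i :=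
  Fin.induction (𝟙 _) (fun i ih => ih ≫ c.f i)

/-- The subcategory `F(P)` of objects admitting a filtration with factors in `P`. -/
def Filt (P : Set C) : Set C :=
  {M | ∃ (t : ℕ) (c : S.FChain t), IsZero (c.obj 0) ∧ c.obj (Fin.last t) = M ∧
      ∀ i, c.factor i ∈ P}

/-- An `(E, s)`-simple object: a non-zero object `M` such that in every extriangle
`A →a M → X ⇢` the inflation `a` is zero or an isomorphism. -/
def SSimple (M : C) : Prop :=
  ¬ IsZero M ∧ ∀ (A X : C) (a : A ⟶ M) (g : M ⟶ X) (δ : S.Ext X A),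
    S.IsExtriangle a g δ → a = 0 ∨ IsIso a

/-- The zero objects of `C` are `(E, s)`-simple-like. -/
def ZeroSimpleLike : Prop :=
  ∀ (A Z X : C) (f : A ⟶ Z) (g : Z ⟶ X) (δ : S.Ext X A),
    IsZero Z → S.IsExtriangle f g δ → IsZero A

/-- `c` is an `(E, s)`-composition series of `M`. -/
def IsCompSeries {t : ℕ} (c : S.FChain t) (M : C) : Prop :=
  IsZero (c.obj 0) ∧ c.obj (Fin.last t) = M ∧ ∀ i, S.SSimple (c.factor i)

/-- `(A, E, s)` is a length extriangulated category. -/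
def LengthCat : Prop :=
  ∀ M : C, (∃ (t : ℕ) (c : S.FChain t), S.IsCompSeries c M) ∧
    ∃ N : ℕ, ∀ (t : ℕ) (c : S.FChain t), S.IsCompSeries c M → t ≤ N

/-- `(A, E, s)` is a Jordan–Hölder extriangulated category: any two composition series
of an object have the same length and, up to a permutation, isomorphic simple factors. -/
def JordanHolder : Prop :=
  ∀ (M : C) (t t' : ℕ) (c : S.FChain t) (c' : S.FChain t'),
    S.IsCompSeries c M → S.IsCompSeries c' M →
    ∃ e : Fin t ≃ Fin t', ∀ i, Nonempty (c.factor i ≅ c'.factor (e i))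

/-- `c` is an `(E, s)`-inflation series of `B`: a filtration of `B` with non-zero factors. -/
def IsInflSeries {t : ℕ} (c : S.FChain t) (B : C) : Prop :=
  IsZero (c.obj 0) ∧ c.obj (Fin.last t) = B ∧ ∀ i, ¬ IsZero (c.factor i)

/-- `X` and `Y` admit isomorphic `(E, s)`-inflation series. -/
def HaveIsoInflSeries (X Y : C) : Prop :=
  ∃ (t : ℕ) (c d : S.FChain t), S.IsInflSeries c X ∧ S.IsInflSeries d Y ∧
    ∃ e : Equiv.Perm (Fin t), ∀ i, Nonempty (c.factor i ≅ d.factor (e i))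

/-- Simplicity of `M` with respect to the extriangulated structure restricted to the
extension-closed subcategory `𝒮`: extriangles of the restricted structure are exactly
the ambient extriangles all of whose terms lie in `𝒮`. -/
def SimpleIn (𝒮 : Set C) (M : C) : Prop :=
  M ∈ 𝒮 ∧ ¬ IsZero M ∧ ∀ (A X : C) (a : A ⟶ M) (g : M ⟶ X) (δ : S.Ext X A),
    A ∈ 𝒮 → X ∈ 𝒮 → S.IsExtriangle a g δ → a = 0 ∨ IsIso a

/-- `c` is a composition series of `M` in the extriangulated structure restricted to `𝒮`. -/
def IsCompSeriesIn (𝒮 : Set C) {t : ℕ} (c : S.FChain t) (M : C) : Prop :=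
  IsZero (c.obj 0) ∧ c.obj (Fin.last t) = M ∧ (∀ i, c.obj i ∈ 𝒮) ∧
    ∀ i, S.SimpleIn 𝒮 (c.factor i)

section Star

variable [HasZeroObject C] [HasFiniteBiproducts C]

/-- The subcategory `P ∗ Q` of objects `Z` admitting an extriangle `X → Z → Y ⇢`
with `X ∈ P` and `Y ∈ Q`. -/
def star (P Q : Set C) : Set C :=
  {Z | ∃ (X Y : C) (f : X ⟶ Z) (g : Z ⟶ Y) (δ : S.Ext Y X),
      X ∈ P ∧ Y ∈ Q ∧ S.IsExtriangle f g δ}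

/-- Iterated `∗` of a list of subcategories (the empty `∗` being the zero objects). -/
def starMany : List (Set C) → Set C
  | [] => {Z | IsZero Z}
  | P :: l => S.star P (starMany l)

end Star

/-- The relative projectives `P(P) = {Z : E(Z, Y) = 0 for all Y ∈ F(P)}`. -/
def projSet (P : Set C) : Set C :=
  {Z | ∀ Y ∈ S.Filt P, ∀ δ : S.Ext Z Y, δ = 0}

/-- `Hom(W, −)` is left exact on the extriangulated structure restricted to `𝒮`:
for every extriangle `A →a B → X ⇢` with all terms in `𝒮`, composition with `a`
is injective on morphisms from `W`. -/
def HomLeftExactOn (W : C) (𝒮 : Set C) : Prop :=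
  ∀ (A B X : C) (a : A ⟶ B) (g : B ⟶ X) (δ : S.Ext X A),
    A ∈ 𝒮 → B ∈ 𝒮 → X ∈ 𝒮 → S.IsExtriangle a g δ →
    ∀ φ ψ : W ⟶ A, φ ≫ a = ψ ≫ a → φ = ψ

/-- The subset of the free abelian group on objects consisting of the defining
relations of the Grothendieck group `K₀(A, E, s)`. -/
def K0Rels : Set (FreeAbelianGroup C) :=
  {x | ∃ (A B X : C) (f : A ⟶ B) (g : B ⟶ X) (δ : S.Ext X A), S.IsExtriangle f g δ ∧
      x = FreeAbelianGroup.of A + FreeAbelianGroup.of X - FreeAbelianGroup.of B} ∪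
  {x | ∃ (X Y : C) (_ : X ≅ Y), x = FreeAbelianGroup.of X - FreeAbelianGroup.of Y}

/-- `[M] = [M']` in the Grothendieck group `K₀(A, E, s)`, the quotient of the free
abelian group on (isomorphism classes of) objects by the extriangle relations. -/
def GrpRel (M M' : C) : Prop :=
  FreeAbelianGroup.of M - FreeAbelianGroup.of M' ∈ AddSubgroup.closure S.K0Rels

end PreExt

/-- The congruence defining the Grothendieck monoid: `MonRel S M M'` holds if and only
if `[M] = [M']` in the Grothendieck monoid `M(A, E, s)`, the quotient of the monoid of
isomorphism classes of objects (under `⊞`) by the congruence generated by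
`[B] ∼ [A] + [X]` for each extriangle `A → B → X ⇢`. -/
inductive MonRel {C : Type u} [Category.{v} C] [Preadditive C] [HasZeroObject C]
    [HasFiniteBiproducts C] (S : PreExt C) : C → C → Prop
  | of {A B X : C} {f : A ⟶ B} {g : B ⟶ X} {δ : S.Ext X A}
      (h : S.IsExtriangle f g δ) : MonRel S B (A ⊞ X)
  | iso {X Y : C} (e : X ≅ Y) : MonRel S X Y
  | symm {X Y : C} : MonRel S X Y → MonRel S Y X
  | trans {X Y Z : C} : MonRel S X Y → MonRel S Y Z → MonRel S X Z
  | add {X Y : C} (Z : C) : MonRel S X Y → MonRel S (X ⊞ Z) (Y ⊞ Z)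

/-- `[M]` is an atom of the Grothendieck monoid `M(A, E, s)`. -/
def IsAtomClass {C : Type u} [Category.{v} C] [Preadditive C] [HasZeroObject C]
    [HasFiniteBiproducts C] (S : PreExt C) (M : C) : Prop :=
  ¬ MonRel S M 0 ∧ ∀ X Y : C, MonRel S M (X ⊞ Y) → MonRel S X 0 ∨ MonRel S Y 0

/-- An additive category is weakly idempotent complete if every retraction admits a kernel. -/
def WeaklyIdemComplete (C : Type u) [Category.{v} C] [Preadditive C] : Prop :=
  ∀ (X Y : C) (r : X ⟶ Y), IsSplitEpi r → HasKernel r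

/-- A set of objects is closed under direct summands. -/
def ClosedSummands {C : Type u} [Category.{v} C] [Preadditive C] [HasZeroObject C]
    [HasFiniteBiproducts C] (P : Set C) : Prop :=
  ∀ (X Y Z : C), Z ∈ P → Nonempty (Z ≅ X ⊞ Y) → X ∈ P

/-- A Krull–Schmidt category: every object is a finite biproduct of objects having
local endomorphism rings. -/
def KrullSchmidtCat (C : Type u) [Category.{v} C] [Preadditive C] [HasZeroObject C]
    [HasFiniteBiproducts C] : Prop :=
  ∀ X : C, ∃ (n : ℕ) (Y : Fin n → C),
    (∀ i, IsLocalRing (End (Y i))) ∧ Nonempty (X ≅ ⨁ Y)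

/-- The closure `add Ψ` of a set of objects under finite direct sums and isomorphisms. -/
def addSet {C : Type u} [Category.{v} C] [Preadditive C] [HasZeroObject C]
    [HasFiniteBiproducts C] (P : Set C) : Set C :=
  {X | ∃ (m : ℕ) (f : Fin m → C), (∀ k, f k ∈ P) ∧ Nonempty (X ≅ ⨁ f)}

/-- An indecomposable object. -/
def Indec {C : Type u} [Category.{v} C] [Preadditive C] [HasZeroObject C]
    [HasFiniteBiproducts C] (X : C) : Prop :=
  ¬ IsZero X ∧ ∀ (Y Z : C), Nonempty (X ≅ Y ⊞ Z) → IsZero Y ∨ IsZero Z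

/-- A morphism `q` is right minimal. -/
def RightMinimal {C : Type u} [Category.{v} C] {X Y : C} (q : X ⟶ Y) : Prop :=
  ∀ g : X ⟶ X, g ≫ q = q → IsIso g

/-- The extra structure making an extriangulated category into an artin `R`-linear
extriangulated category: an `R`-module structure on each `E(X, A)` for which `E` is
`R`-bilinear, with all Hom-sets and all `E(X, A)` of finite length over `R`. -/
structure ArtinLinear {C : Type u} [Category.{v} C] [Preadditive C]
    (R : Type*) [CommRing R] [CategoryTheory.Linear R C] (S : PreExt C) where
  module : ∀ X A : C, Module R (S.Ext X A)
  push_smul : ∀ {X A A' : C} (r : R) (a : A ⟶ A') (δ : S.Ext X A),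
      S.push (r • a) δ = letI := module X A'; r • S.push a δ
  pull_smul : ∀ {X' X A : C} (r : R) (c : X' ⟶ X) (δ : S.Ext X A),
      S.pull (r • c) δ = letI := module X' A; r • S.pull c δ
  homFinite : ∀ X Y : C, IsFiniteLength R (X ⟶ Y)
  extFinite : ∀ X A : C, letI := module X A; IsFiniteLength R (S.Ext X A)

/-- An `E`-stratifying system: a finite family of indecomposable objects subject to
the orthogonality axioms (S1) and (S2). -/
structure IsStratSys {C : Type u} [Category.{v} C] [Preadditive C] [HasZeroObject C]
    [HasFiniteBiproducts C] (S : PreExt C) {n : ℕ} (Φ : Fin n → C) : Prop where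
  indec : ∀ i, Indec (Φ i)
  s1 : ∀ i j : Fin n, i < j → ∀ φ : Φ j ⟶ Φ i, φ = 0
  s2 : ∀ i j : Fin n, i ≤ j → ∀ δ : S.Ext (Φ j) (Φ i), δ = 0

/-- The data of extriangles `K i → Q i → Φ i ⇢η i` with `K i ∈ F(Φ_{j>i})`, as in
axiom (PS2) of a projective `E`-stratifying system. -/
structure ProjData {C : Type u} [Category.{v} C] [Preadditive C]
    (S : PreExt C) {n : ℕ} (Φ Q : Fin n → C) where
  K : Fin n → C
  k : ∀ i, K i ⟶ Q i
  q : ∀ i, Q i ⟶ Φ i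
  η : ∀ i, S.Ext (Φ i) (K i)
  ext : ∀ i, S.IsExtriangle (k i) (q i) (η i)
  kmem : ∀ i, K i ∈ S.Filt (Φ '' {j | i < j})

/-- `(Φ, Q)` is a projective `E`-stratifying system. -/
def IsProjSS {C : Type u} [Category.{v} C] [Preadditive C] [HasZeroObject C]
    [HasFiniteBiproducts C] (S : PreExt C) {n : ℕ} (Φ Q : Fin n → C) : Prop :=
  IsStratSys S Φ ∧ (∀ i j : Fin n, ∀ δ : S.Ext (Q i) (Φ j), δ = 0) ∧
    Nonempty (ProjData S Φ Q)

/-- `(Φ, Q)` is a minimal projective `E`-stratifying system: the morphisms `q i` of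
the extriangles witnessing (PS2) may be chosen right minimal. -/
def IsMinProjSS {C : Type u} [Category.{v} C] [Preadditive C] [HasZeroObject C]
    [HasFiniteBiproducts C] (S : PreExt C) {n : ℕ} (Φ Q : Fin n → C) : Prop :=
  IsStratSys S Φ ∧ (∀ i j : Fin n, ∀ δ : S.Ext (Q i) (Φ j), δ = 0) ∧
    ∃ d : ProjData S Φ Q, ∀ i, RightMinimal (d.q i)

section Statements

variable {C : Type u} [Category.{v} C] [Preadditive C] [HasZeroObject C] [HasFiniteBiproducts C]

section Helpers

lemma aux_push_comp (S : PreExt C) {X A A' A'' : C} (a : A ⟶ A') (b : A' ⟶ A'')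
    (δ : S.Ext X A) : S.push (a ≫ b) δ = S.push b (S.push a δ) := by
  show ((S.E.obj (Opposite.op X)).map (a ≫ b)) δ = _
  rw [(S.E.obj (Opposite.op X)).map_comp]
  rfl

lemma aux_push_id (S : PreExt C) {X A : C} (δ : S.Ext X A) : S.push (𝟙 A) δ = δ := by
  show ((S.E.obj (Opposite.op X)).map (𝟙 A)) δ = δ
  rw [(S.E.obj (Opposite.op X)).map_id]
  rfl

lemma aux_pull_comp (S : PreExt C) {X'' X' X A : C} (c : X'' ⟶ X') (d : X' ⟶ X)
    (δ : S.Ext X A) : S.pull (c ≫ d) δ = S.pull c (S.pull d δ) := by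
  show ((S.E.map (c ≫ d).op).app A) δ = _
  rw [op_comp, S.E.map_comp, NatTrans.comp_app]
  rfl

lemma aux_pull_id (S : PreExt C) {X A : C} (δ : S.Ext X A) : S.pull (𝟙 X) δ = δ := by
  show ((S.E.map (𝟙 X).op).app A) δ = δ
  rw [op_id, S.E.map_id, NatTrans.id_app]
  rfl

lemma aux_push_pull (S : PreExt C) {X' X A A' : C} (c : X' ⟶ X) (a : A ⟶ A')
    (δ : S.Ext X A) : S.push a (S.pull c δ) = S.pull c (S.push a δ) := by
  show ((S.E.obj (Opposite.op X')).map a) (((S.E.map c.op).app A) δ)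
    = ((S.E.map c.op).app A') (((S.E.obj (Opposite.op X)).map a) δ)
  rw [← comp_apply, ← comp_apply, NatTrans.naturality]

lemma aux_push_zero (S : PreExt C) {X A A' : C} (a : A ⟶ A') :
    S.push a (0 : S.Ext X A) = 0 := by
  show ((S.E.obj (Opposite.op X)).map a) (0 : S.Ext X A) = 0
  exact map_zero (by exact ((S.E.obj (Opposite.op X)).map a).hom :
    ((S.E.obj (Opposite.op X)).obj A) →+ ((S.E.obj (Opposite.op X)).obj A'))

lemma aux_pull_zero (S : PreExt C) {X' X A : C} (c : X' ⟶ X) :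
    S.pull c (0 : S.Ext X A) = 0 := by
  show ((S.E.map c.op).app A) (0 : S.Ext X A) = 0
  exact map_zero (by exact ((S.E.map c.op).app A).hom :
    ((S.E.obj (Opposite.op X)).obj A) →+ ((S.E.obj (Opposite.op X')).obj A))

/-- The trivial extriangle `W = W → 0`. -/
lemma aux_triv (S : PreExt C) (hS : S.IsET) (W : C) :
    S.IsExtriangle (𝟙 W) (0 : W ⟶ (0 : C)) (0 : S.Ext (0 : C) W) := by
  have h0 := hS.realize_zero W (0 : C)
  let e : W ⊞ (0 : C) ≅ W :=
    { hom := biprod.fst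
      inv := biprod.inl
      hom_inv_id := by
        apply biprod.hom_ext
        · simp
        · exact (isZero_zero C).eq_of_tgt _ _
      inv_hom_id := by simp }
  have h2 := hS.realize_iso e h0
  have e1 : (biprod.inl : W ⟶ W ⊞ (0 : C)) ≫ e.hom = 𝟙 W := by simp [e]
  have e2 : e.inv ≫ (biprod.snd : W ⊞ (0 : C) ⟶ (0 : C)) = 0 :=
    (isZero_zero C).eq_of_tgt _ _
  rwa [e1, e2] at h2

/-- The trivial extriangle `0 → X = X`. -/
lemma aux_triv' (S : PreExt C) (hS : S.IsET) (X : C) :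
    S.IsExtriangle (0 : (0 : C) ⟶ X) (𝟙 X) (0 : S.Ext X (0 : C)) := by
  have h0 := hS.realize_zero (0 : C) X
  let e : (0 : C) ⊞ X ≅ X :=
    { hom := biprod.snd
      inv := biprod.inr
      hom_inv_id := by
        apply biprod.hom_ext'
        · exact (isZero_zero C).eq_of_src _ _
        · simp
      inv_hom_id := by simp }
  have h2 := hS.realize_iso e h0
  have e1 : (biprod.inl : (0 : C) ⟶ (0 : C) ⊞ X) ≫ e.hom = 0 :=
    (isZero_zero C).eq_of_src _ _
  have e2 : e.inv ≫ (biprod.snd : (0 : C) ⊞ X ⟶ X) = 𝟙 X := by simp [e]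
  rwa [e1, e2] at h2

/-- In any extriangle the composite is zero. -/
lemma aux_comp_zero (S : PreExt C) (hS : S.IsET) {A B X : C} {f : A ⟶ B} {g : B ⟶ X}
    {δ : S.Ext X A} (hT : S.IsExtriangle f g δ) : f ≫ g = 0 := by
  obtain ⟨a, ha, -⟩ := hS.et3op hT (aux_triv' S hS X) g (𝟙 X) rfl
  rw [ha, comp_zero]

/-- `f_* δ = 0` for an extriangle `(f, g, δ)`. -/
lemma aux_push_f (S : PreExt C) (hS : S.IsET) {A B X : C} {f : A ⟶ B} {g : B ⟶ X}
    {δ : S.Ext X A} (hT : S.IsExtriangle f g δ) : S.push f δ = 0 := by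
  obtain ⟨c, -, hc⟩ := hS.et3 hT (hS.realize_zero B X) f (biprod.lift (𝟙 B) g)
    (by apply biprod.hom_ext <;> simp [aux_comp_zero S hS hT])
  rw [hc, aux_pull_zero]

/-- Factorisation through the inflation: `Hom(W, -)`-exactness. -/
lemma aux_fac (S : PreExt C) (hS : S.IsET) {A B X : C} {f : A ⟶ B} {g : B ⟶ X}
    {δ : S.Ext X A} (hT : S.IsExtriangle f g δ) {W : C} (φ : W ⟶ B) (hφ : φ ≫ g = 0) :
    ∃ w : W ⟶ A, w ≫ f = φ := by
  obtain ⟨a, ha, -⟩ := hS.et3op (aux_triv S hS W) hT φ (0 : (0 : C) ⟶ X)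
    (by rw [comp_zero, hφ])
  exact ⟨a, by rw [← ha, Category.id_comp]⟩

/-- An endomorphism of the middle of an extriangle compatible with `f` and `g` is an iso. -/
lemma aux_endo_iso (S : PreExt C) (hS : S.IsET) {A B X : C} {f : A ⟶ B} {g : B ⟶ X}
    {δ : S.Ext X A} (hT : S.IsExtriangle f g δ) (u : B ⟶ B)
    (h1 : f ≫ u = f) (h2 : u ≫ g = g) : IsIso u := by
  obtain ⟨w, hw⟩ := aux_fac S hS hT (𝟙 B - u)
    (by rw [Preadditive.sub_comp, Category.id_comp, h2, sub_self])
  have hu : u = 𝟙 B - w ≫ f := by rw [hw]; exact (sub_sub_cancel _ _).symm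
  have hn : f ≫ w ≫ f = 0 := by
    have h1' := h1
    rw [hu, Preadditive.comp_sub, Category.comp_id, sub_eq_self] at h1'
    exact h1'
  have hnn : (w ≫ f) ≫ w ≫ f = 0 := by
    rw [Category.assoc, hn, comp_zero]
  refine ⟨⟨𝟙 B + w ≫ f, ?_, ?_⟩⟩
  · rw [hu]
    simp only [Preadditive.sub_comp, Preadditive.comp_add, Category.id_comp,
      Category.comp_id, hnn, add_zero]
    abel
  · rw [hu]
    simp only [Preadditive.add_comp, Preadditive.comp_sub, Category.id_comp,
      Category.comp_id, hnn, sub_zero]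
    abel

lemma aux_sandwich {P Q : C} (b : P ⟶ Q) (b' : Q ⟶ P)
    (h1 : IsIso (b ≫ b')) (h2 : IsIso (b' ≫ b)) : IsIso b := by
  have hr : b ≫ (b' ≫ inv (b ≫ b')) = 𝟙 P := by
    rw [← Category.assoc, IsIso.hom_inv_id]
  have hl : (inv (b' ≫ b) ≫ b') ≫ b = 𝟙 Q := by
    rw [Category.assoc, IsIso.inv_hom_id]
  have heq : inv (b' ≫ b) ≫ b' = b' ≫ inv (b ≫ b') := by
    calc inv (b' ≫ b) ≫ b'
        = (inv (b' ≫ b) ≫ b') ≫ (b ≫ (b' ≫ inv (b ≫ b'))) := by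
          rw [hr, Category.comp_id]
      _ = ((inv (b' ≫ b) ≫ b') ≫ b) ≫ (b' ≫ inv (b ≫ b')) := by
          rw [← Category.assoc, ← Category.assoc]
      _ = b' ≫ inv (b ≫ b') := by rw [hl, Category.id_comp]
  exact ⟨⟨b' ≫ inv (b ≫ b'), hr, by rw [← heq, hl]⟩⟩

/-- Transport of an extriangle along an isomorphism of the first object. -/
lemma aux_transA (S : PreExt C) (hS : S.IsET) {A A' B X : C} (i : A ≅ A')
    {f : A ⟶ B} {g : B ⟶ X} {δ : S.Ext X A} (hT : S.IsExtriangle f g δ) :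
    S.IsExtriangle (i.inv ≫ f) g (S.push i.hom δ) := by
  obtain ⟨B'', f'', g'', hT''⟩ := hS.realize_exists (S.push i.hom δ)
  obtain ⟨b, hb1, hb2⟩ := hS.realize_map hT hT'' i.hom (𝟙 X) (by rw [aux_pull_id])
  obtain ⟨b', hb1', hb2'⟩ := hS.realize_map hT'' hT i.inv (𝟙 X)
    (by rw [← aux_push_comp, i.hom_inv_id, aux_push_id, aux_pull_id])
  rw [Category.comp_id] at hb2 hb2'
  have hbb : IsIso (b ≫ b') := aux_endo_iso S hS hT (b ≫ b')
    (by rw [← Category.assoc, hb1, Category.assoc, hb1', ← Category.assoc,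
      i.hom_inv_id, Category.id_comp])
    (by rw [Category.assoc, hb2', hb2])
  have hb'b : IsIso (b' ≫ b) := aux_endo_iso S hS hT'' (b' ≫ b)
    (by rw [← Category.assoc, hb1', Category.assoc, hb1, ← Category.assoc,
      i.inv_hom_id, Category.id_comp])
    (by rw [Category.assoc, hb2, hb2'])
  have : IsIso b' := aux_sandwich b' b hb'b hbb
  have h3 := hS.realize_iso (asIso b') hT''
  simp only [asIso_hom, asIso_inv] at h3
  have e2 : inv b' ≫ g'' = g := by
    rw [IsIso.inv_comp_eq]
    exact hb2'.symm
  rwa [hb1', e2] at h3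

/-- Transport of an extriangle along an isomorphism of the last object. -/
lemma aux_transX (S : PreExt C) (hS : S.IsET) {A B X X' : C} (j : X ≅ X')
    {f : A ⟶ B} {g : B ⟶ X'} {δ : S.Ext X' A} (hT : S.IsExtriangle f g δ) :
    S.IsExtriangle f (g ≫ j.inv) (S.pull j.hom δ) := by
  obtain ⟨B₂, f₂, g₂, hT₂⟩ := hS.realize_exists (S.pull j.hom δ)
  obtain ⟨b, hb1, hb2⟩ := hS.realize_map hT₂ hT (𝟙 A) j.hom (by rw [aux_push_id])
  obtain ⟨b', hb1', hb2'⟩ := hS.realize_map hT hT₂ (𝟙 A) j.inv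
    (by rw [aux_push_id, ← aux_pull_comp, j.inv_hom_id, aux_pull_id])
  rw [Category.id_comp] at hb1 hb1'
  have hbb' : IsIso (b' ≫ b) := aux_endo_iso S hS hT (b' ≫ b)
    (by rw [← Category.assoc, hb1', hb1])
    (by rw [Category.assoc, hb2, ← Category.assoc, hb2', Category.assoc,
      j.inv_hom_id, Category.comp_id])
  have hb'b : IsIso (b ≫ b') := aux_endo_iso S hS hT₂ (b ≫ b')
    (by rw [← Category.assoc, hb1, hb1'])
    (by rw [Category.assoc, hb2', ← Category.assoc, hb2, Category.assoc,
      j.hom_inv_id, Category.comp_id])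
  have : IsIso b := aux_sandwich b b' hb'b hbb'
  have h3 := hS.realize_iso (asIso b) hT₂
  simp only [asIso_hom, asIso_inv] at h3
  have e2 : inv b ≫ g₂ = g ≫ j.inv := by
    rw [IsIso.inv_comp_eq]
    have h4 : b ≫ g ≫ j.inv = g₂ := by
      rw [← Category.assoc, hb2, Category.assoc, j.hom_inv_id, Category.comp_id]
    exact h4.symm
  rwa [hb1, e2] at h3

end Helpers

theorem stmt1 (S : PreExt C) (hS : S.IsET) (hwic : WeaklyIdemComplete C)
    {A B₁ B₂ X : C} (a₁ : A ⟶ B₁) (a₂ : A ⟶ B₂) (b₂ : B₂ ⟶ X) (δ : S.Ext X A)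
    (h : S.IsExtriangle (biprod.lift a₁ a₂) (biprod.desc 0 b₂) δ) :
    ∃ (A' : C) (x : B₁ ⟶ A) (s : A' ⟶ A) (δ' : S.Ext X A'),
      IsIso (biprod.desc x s) ∧
      S.IsExtriangle (s ≫ a₂) b₂ δ' ∧
      S.TriIso (biprod.lift a₁ a₂) (biprod.desc 0 b₂) δ
        (biprod.map (𝟙 B₁) (s ≫ a₂)) (biprod.map (0 : B₁ ⟶ (0 : C)) b₂)
        (S.sumExt (0 : S.Ext (0 : C) B₁) δ') ∧
      S.IsDeflation b₂ := by
  classical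
  -- a retraction of `a₁`
  obtain ⟨x, hx⟩ := aux_fac S hS h (biprod.inl : B₁ ⟶ B₁ ⊞ B₂) (by simp)
  have hxa₁ : x ≫ a₁ = 𝟙 B₁ := by
    have h' := congrArg (fun k => k ≫ (biprod.fst : B₁ ⊞ B₂ ⟶ B₁)) hx
    simpa using h'
  have hxa₂ : x ≫ a₂ = 0 := by
    have h' := congrArg (fun k => k ≫ (biprod.snd : B₁ ⊞ B₂ ⟶ B₂)) hx
    simpa using h'
  -- the kernel of `a₁`
  haveI : HasKernel a₁ := hwic A B₁ a₁ ⟨⟨⟨x, hxa₁⟩⟩⟩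
  set A' := kernel a₁ with hA'
  set s : A' ⟶ A := kernel.ι a₁ with hs
  have hsa₁ : s ≫ a₁ = 0 := kernel.condition a₁
  have hlift : (𝟙 A - a₁ ≫ x) ≫ a₁ = 0 := by
    rw [Preadditive.sub_comp, Category.id_comp, Category.assoc, hxa₁,
      Category.comp_id, sub_self]
  set t : A ⟶ A' := kernel.lift a₁ (𝟙 A - a₁ ≫ x) hlift with ht
  have hts : t ≫ s = 𝟙 A - a₁ ≫ x := kernel.lift_ι _ _ _
  have hst : s ≫ t = 𝟙 A' := by
    rw [← cancel_mono s, Category.assoc, hts, Preadditive.comp_sub,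
      Category.comp_id, Category.id_comp, ← Category.assoc, hsa₁, zero_comp, sub_zero]
  have hxt : x ≫ t = 0 := by
    rw [← cancel_mono s, Category.assoc, hts, Preadditive.comp_sub, Category.comp_id,
      ← Category.assoc, hxa₁, Category.id_comp, sub_self, zero_comp]
  -- `(x, s) : B₁ ⊞ A' ≅ A`
  have hinv1 : biprod.lift a₁ t ≫ biprod.desc x s = 𝟙 A := by
    rw [biprod.lift_desc, hts]
    abel
  have hinv2 : biprod.desc x s ≫ biprod.lift a₁ t = 𝟙 (B₁ ⊞ A') := by
    apply biprod.hom_ext'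
    · apply biprod.hom_ext <;> simp [hxa₁, hxt]
    · apply biprod.hom_ext <;> simp [hsa₁, hst]
  have hIso : IsIso (biprod.desc x s) := ⟨⟨biprod.lift a₁ t, hinv2, hinv1⟩⟩
  set iA : A ≅ B₁ ⊞ A' :=
    { hom := biprod.lift a₁ t
      inv := biprod.desc x s
      hom_inv_id := hinv1
      inv_hom_id := hinv2 } with hiA
  set δ' : S.Ext X A' := S.push t δ with hδ'
  -- the key identity on extensions
  have hpushf : S.push (biprod.lift a₁ a₂) δ = 0 := aux_push_f S hS h
  have hpa₁ : S.push a₁ δ = 0 := by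
    have : a₁ = biprod.lift a₁ a₂ ≫ biprod.fst := by simp
    rw [this, aux_push_comp, hpushf, aux_push_zero]
  have hkey : S.push (biprod.lift a₁ t) δ
      = S.push (biprod.inr : A' ⟶ B₁ ⊞ A') δ' := by
    rw [biprod.lift_eq, hS.push_add, aux_push_comp, aux_push_comp, hpa₁,
      aux_push_zero, zero_add, hδ']
  -- transported extriangle `E_a`
  have hmap : iA.inv ≫ biprod.lift a₁ a₂ = biprod.map (𝟙 B₁) (s ≫ a₂) := by
    rw [hiA]
    apply biprod.hom_ext'
    · apply biprod.hom_ext <;> simp [hxa₁, hxa₂]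
    · apply biprod.hom_ext <;> simp [hsa₁]
  have hEa : S.IsExtriangle (biprod.map (𝟙 B₁) (s ≫ a₂)) (biprod.desc 0 b₂)
      (S.push (biprod.inr : A' ⟶ B₁ ⊞ A') δ') := by
    have h1 := aux_transA S hS iA h
    rw [hmap] at h1
    rwa [show iA.hom = biprod.lift a₁ t from rfl, hkey] at h1
  -- a realisation of `δ'` and the sum extriangle `E_b`
  obtain ⟨M, u, v, hUV⟩ := hS.realize_exists δ'
  have hsum := hS.realize_sum (aux_triv S hS B₁) hUV
  set jX : X ≅ (0 : C) ⊞ X :=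
    { hom := biprod.inr
      inv := biprod.snd
      hom_inv_id := by simp
      inv_hom_id := by
        apply biprod.hom_ext'
        · exact (isZero_zero C).eq_of_src _ _
        · simp } with hjX
  have hEb0 := aux_transX S hS jX hsum
  have hpullsum : S.pull jX.hom (S.sumExt (0 : S.Ext (0 : C) B₁) δ')
      = S.push (biprod.inr : A' ⟶ B₁ ⊞ A') δ' := by
    rw [PreExt.sumExt, aux_pull_zero, aux_push_zero, zero_add,
      show jX.hom = (biprod.inr : X ⟶ (0 : C) ⊞ X) from rfl,
      ← aux_push_pull, ← aux_pull_comp, biprod.inr_snd, aux_pull_id]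
  have hgv : biprod.map (0 : B₁ ⟶ (0 : C)) v ≫ jX.inv
      = (biprod.snd : B₁ ⊞ M ⟶ M) ≫ v := by
    rw [show jX.inv = (biprod.snd : (0 : C) ⊞ X ⟶ X) from rfl]
    apply biprod.hom_ext'
    · have : (0 : B₁ ⟶ (0 : C)) ≫ (biprod.inl : (0 : C) ⟶ (0 : C) ⊞ X) ≫ biprod.snd
          = (0 : B₁ ⟶ X) := by simp
      simp
    · simp
  have hEb : S.IsExtriangle (biprod.map (𝟙 B₁) u)
      ((biprod.snd : B₁ ⊞ M ⟶ M) ≫ v)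
      (S.push (biprod.inr : A' ⟶ B₁ ⊞ A') δ') := by
    rw [← hgv, ← hpullsum]
    exact hEb0
  -- compare the two realisations
  obtain ⟨e, he1, he2⟩ := hS.realize_unique hEa hEb
  -- the component `m : B₂ ⟶ M` of `e` is an isomorphism
  set m : B₂ ⟶ M := biprod.inr ≫ e.hom ≫ biprod.snd with hm
  set c : B₂ ⟶ B₁ := biprod.inr ≫ e.hom ≫ biprod.fst with hc
  have hinle : (biprod.inl : B₁ ⟶ B₁ ⊞ B₂) ≫ e.hom = biprod.inl := by
    have h' : biprod.inl ≫ biprod.map (𝟙 B₁) (s ≫ a₂) ≫ e.hom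
        = biprod.inl ≫ biprod.map (𝟙 B₁) u := by rw [he1]
    simpa using h'
  have hinre : (biprod.inr : B₂ ⟶ B₁ ⊞ B₂) ≫ e.hom
      = c ≫ biprod.inl + m ≫ biprod.inr := by
    rw [hc, hm]
    apply biprod.hom_ext <;>
      simp [Preadditive.add_comp]
  have hm1 : (s ≫ a₂) ≫ m = u := by
    have h' : biprod.inr ≫ (biprod.map (𝟙 B₁) (s ≫ a₂) ≫ e.hom) ≫ biprod.snd
        = biprod.inr ≫ biprod.map (𝟙 B₁) u ≫ biprod.snd := by rw [he1]
    rw [hm]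
    simpa using h'
  have hm2 : m ≫ v = b₂ := by
    have h' : biprod.inr ≫ e.hom ≫ biprod.snd ≫ v
        = biprod.inr ≫ biprod.desc (0 : B₁ ⟶ X) b₂ := by rw [he2]
    rw [hm, Category.assoc, Category.assoc]
    simpa using h'
  -- kill the off-diagonal entry
  set Q : B₁ ⊞ B₂ ⟶ B₁ ⊞ B₂ := 𝟙 (B₁ ⊞ B₂) - biprod.snd ≫ c ≫ biprod.inl with hQ
  have hQiso : IsIso Q := by
    refine ⟨⟨𝟙 (B₁ ⊞ B₂) + biprod.snd ≫ c ≫ biprod.inl, ?_, ?_⟩⟩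
    · rw [hQ]
      have hz : (biprod.snd ≫ c ≫ biprod.inl) ≫ biprod.snd ≫ c ≫ biprod.inl
          = (0 : B₁ ⊞ B₂ ⟶ B₁ ⊞ B₂) := by
        simp
      simp [Preadditive.sub_comp, Preadditive.comp_add, hz]
    · rw [hQ]
      have hz : (biprod.snd ≫ c ≫ biprod.inl) ≫ biprod.snd ≫ c ≫ biprod.inl
          = (0 : B₁ ⊞ B₂ ⟶ B₁ ⊞ B₂) := by
        simp
      simp [Preadditive.add_comp, Preadditive.comp_sub, hz]
  have hQe : Q ≫ e.hom = biprod.map (𝟙 B₁) m := by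
    rw [hQ, Preadditive.sub_comp, Category.id_comp]
    have h5 : ((biprod.snd : B₁ ⊞ B₂ ⟶ B₂) ≫ c ≫ biprod.inl) ≫ e.hom
        = (biprod.snd : B₁ ⊞ B₂ ⟶ B₂) ≫ c ≫ biprod.inl := by
      rw [Category.assoc, Category.assoc, hinle]
    rw [h5]
    apply biprod.hom_ext'
    · simp [Preadditive.comp_sub, hinle]
    · rw [Preadditive.comp_sub, hinre]
      simp [add_sub_cancel_left]
  have hDiso : IsIso (biprod.map (𝟙 B₁) m) := by
    rw [← hQe]
    exact inferInstance
  set w : B₁ ⊞ M ⟶ B₁ ⊞ B₂ := inv (biprod.map (𝟙 B₁) m) with hw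
  set m' : M ⟶ B₂ := biprod.inr ≫ w ≫ biprod.snd with hm'
  have hDw : biprod.map (𝟙 B₁) m ≫ w = 𝟙 (B₁ ⊞ B₂) := by
    rw [hw]
    exact IsIso.hom_inv_id _
  have hwD : w ≫ biprod.map (𝟙 B₁) m = 𝟙 (B₁ ⊞ M) := by
    rw [hw]
    exact IsIso.inv_hom_id _
  have hmm' : m ≫ m' = 𝟙 B₂ := by
    calc m ≫ m' = (m ≫ biprod.inr) ≫ w ≫ biprod.snd := by
          rw [hm']
          simp only [Category.assoc]
      _ = (biprod.inr ≫ biprod.map (𝟙 B₁) m) ≫ w ≫ biprod.snd := by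
          rw [biprod.inr_map]
      _ = biprod.inr ≫ (biprod.map (𝟙 B₁) m ≫ w) ≫ biprod.snd := by
          simp only [Category.assoc]
      _ = 𝟙 B₂ := by rw [hDw, Category.id_comp, biprod.inr_snd]
  have hm'm : m' ≫ m = 𝟙 M := by
    calc m' ≫ m = biprod.inr ≫ w ≫ biprod.snd ≫ m := by
          rw [hm']
          simp only [Category.assoc]
      _ = biprod.inr ≫ w ≫ biprod.map (𝟙 B₁) m ≫ biprod.snd := by
          rw [biprod.map_snd]
      _ = biprod.inr ≫ (w ≫ biprod.map (𝟙 B₁) m) ≫ biprod.snd := by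
          simp only [Category.assoc]
      _ = 𝟙 M := by rw [hwD, Category.id_comp, biprod.inr_snd]
  set eM : M ≅ B₂ :=
    { hom := m'
      inv := m
      hom_inv_id := hm'm
      inv_hom_id := hmm' } with heM
  have hfin0 := hS.realize_iso eM hUV
  have hum' : u ≫ m' = s ≫ a₂ := by
    rw [← hm1, Category.assoc, hmm', Category.comp_id]
  have hfinal : S.IsExtriangle (s ≫ a₂) b₂ δ' := by
    rw [show eM.hom = m' from rfl, hum'] at hfin0
    rwa [show eM.inv = m from rfl, hm2] at hfin0
  -- assemble everything
  refine ⟨A', x, s, δ', hIso, hfinal, ?_, ⟨A', s ≫ a₂, δ', hfinal⟩⟩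
  refine ⟨iA, Iso.refl _, jX, ?_, ?_, ?_⟩
  · rw [show (Iso.refl (B₁ ⊞ B₂)).hom = 𝟙 (B₁ ⊞ B₂) from rfl, Category.comp_id,
      show iA.hom = biprod.lift a₁ t from rfl]
    have h6 : t ≫ s ≫ a₂ = a₂ := by
      rw [← Category.assoc, hts, Preadditive.sub_comp, Category.id_comp,
        Category.assoc, hxa₂, comp_zero, sub_zero]
    apply biprod.hom_ext
    · simp
    · simp [h6]
  · rw [show (Iso.refl (B₁ ⊞ B₂)).hom = 𝟙 (B₁ ⊞ B₂) from rfl, Category.id_comp,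
      show jX.hom = (biprod.inr : X ⟶ (0 : C) ⊞ X) from rfl]
    apply biprod.hom_ext'
    · apply biprod.hom_ext
      · exact (isZero_zero C).eq_of_tgt _ _
      · simp
    · apply biprod.hom_ext
      · exact (isZero_zero C).eq_of_tgt _ _
      · simp
  · rw [show iA.hom = biprod.lift a₁ t from rfl, hkey, hpullsum]

end Statements

end ExtriPaper
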